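/- Corollary of Theorem 1 (finite-gain ℓ² stability). Let x_a : ℕ → ℝ^n, x_m : ℕ → ℝ^m, u : ℕ → ℝ be signals with x_m and u being ℓ² signals, let γ > 0 and β ≥ 0, and let T : ℝ^n × ℝ^m × ℝ → ℝ be L-Lipschitz (with respect to the Euclidean norm on the concatenated input) with T(0,0,0) = 0 and L < 1/γ. Define δu_k = T(x_{a,k}, x_{m,k}, u_k), and assume for every N ∈ ℕ the truncated bound (∑_{k=0}^N ‖x_{a,k}‖²)^{1/2} ≤ γ(∑_{k=0}^N |u_k + δu_k|²)^{1/2} + β. Then x_a is an ℓ² signal, i.e., ∑_{k=0}^∞ ‖x_{a,k}‖² < ∞. -/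
import Mathlib

private lemma sqrt_add_le' (x y : ℝ) (hx : 0 ≤ x) (hy : 0 ≤ y) :
    Real.sqrt (x + y) ≤ Real.sqrt x + Real.sqrt y := by
  have h1 := Real.sq_sqrt hx
  have h2 := Real.sq_sqrt hy
  have h3 := Real.sqrt_nonneg x
  have h4 := Real.sqrt_nonneg y
  have h : x + y ≤ (Real.sqrt x + Real.sqrt y) ^ 2 := by nlinarith
  calc Real.sqrt (x + y) ≤ Real.sqrt ((Real.sqrt x + Real.sqrt y) ^ 2) := Real.sqrt_le_sqrt h
    _ = Real.sqrt x + Real.sqrt y := Real.sqrt_sq (by positivity)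

private lemma minkowski' (N : ℕ) (a b : ℕ → ℝ) :
    Real.sqrt (∑ k ∈ Finset.range N, (a k + b k) ^ 2) ≤
      Real.sqrt (∑ k ∈ Finset.range N, (a k) ^ 2) +
      Real.sqrt (∑ k ∈ Finset.range N, (b k) ^ 2) := by
  set A : ℝ := ∑ k ∈ Finset.range N, (a k) ^ 2 with hA
  set Bs : ℝ := ∑ k ∈ Finset.range N, (b k) ^ 2 with hBs
  have hAnn : 0 ≤ A := Finset.sum_nonneg fun k _ => sq_nonneg _
  have hBnn : 0 ≤ Bs := Finset.sum_nonneg fun k _ => sq_nonneg _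
  have cs := Finset.sum_mul_sq_le_sq_mul_sq (Finset.range N) a b
  have hab : ∑ k ∈ Finset.range N, a k * b k ≤ Real.sqrt A * Real.sqrt Bs := by
    have h1 : ∑ k ∈ Finset.range N, a k * b k ≤
        Real.sqrt ((∑ k ∈ Finset.range N, a k * b k) ^ 2) := by
      rw [Real.sqrt_sq_eq_abs]; exact le_abs_self _
    have h2 := Real.sqrt_le_sqrt cs
    rw [Real.sqrt_mul hAnn] at h2
    linarith
  have expand : ∑ k ∈ Finset.range N, (a k + b k) ^ 2 =
      A + 2 * (∑ k ∈ Finset.range N, a k * b k) + Bs := by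
    rw [hA, hBs, Finset.mul_sum, ← Finset.sum_add_distrib, ← Finset.sum_add_distrib]
    exact Finset.sum_congr rfl fun k _ => by ring
  have hfin : ∑ k ∈ Finset.range N, (a k + b k) ^ 2 ≤
      (Real.sqrt A + Real.sqrt Bs) ^ 2 := by
    have := Real.sq_sqrt hAnn
    have := Real.sq_sqrt hBnn
    nlinarith
  calc Real.sqrt (∑ k ∈ Finset.range N, (a k + b k) ^ 2)
      ≤ Real.sqrt ((Real.sqrt A + Real.sqrt Bs) ^ 2) := Real.sqrt_le_sqrt hfin
    _ = Real.sqrt A + Real.sqrt Bs := Real.sqrt_sq (by positivity)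

/-- **Corollary of Theorem 1 (finite-gain ℓ² stability).**
If `x_m` and `u` are ℓ² signals, `T` is `L`-Lipschitz (w.r.t. the Euclidean norm on the
concatenated input) with `T(0,0,0) = 0` and `L < 1/γ`, `δu_k = T(x_{a,k}, x_{m,k}, u_k)`,
and the truncated gain bound
`(∑_{k=0}^N ‖x_{a,k}‖²)^{1/2} ≤ γ(∑_{k=0}^N |u_k + δu_k|²)^{1/2} + β` holds for every `N`,
then `x_a` is an ℓ² signal. -/
theorem lipnet_mrac_finite_gain_l2_stable {n m : ℕ}
    (xa : ℕ → EuclideanSpace ℝ (Fin n)) (xm : ℕ → EuclideanSpace ℝ (Fin m)) (u : ℕ → ℝ)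
    (hxm : Summable fun k => ‖xm k‖ ^ 2)
    (hu : Summable fun k => ‖u k‖ ^ 2)
    (γ β L : ℝ) (hγ : 0 < γ) (hβ : 0 ≤ β) (hL0 : 0 ≤ L)
    (T : EuclideanSpace ℝ (Fin n) → EuclideanSpace ℝ (Fin m) → ℝ → ℝ)
    (hT : ∀ (x x' : EuclideanSpace ℝ (Fin n)) (y y' : EuclideanSpace ℝ (Fin m)) (v v' : ℝ),
      |T x y v - T x' y' v'| ≤ L * Real.sqrt (‖x - x'‖ ^ 2 + ‖y - y'‖ ^ 2 + |v - v'| ^ 2))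
    (hT0 : T 0 0 0 = 0)
    (hLγ : L < 1 / γ)
    (δu : ℕ → ℝ) (hδu : ∀ k, δu k = T (xa k) (xm k) (u k))
    (hgain : ∀ N : ℕ,
      Real.sqrt (∑ k ∈ Finset.range (N + 1), ‖xa k‖ ^ 2) ≤
        γ * Real.sqrt (∑ k ∈ Finset.range (N + 1), |u k + δu k| ^ 2) + β) :
    Summable fun k => ‖xa k‖ ^ 2 := by
  have hγL : γ * L < 1 := by
    rw [lt_div_iff₀ hγ] at hLγ; linarith [mul_comm L γ]
  set U : ℝ := Real.sqrt (∑' k, ‖u k‖ ^ 2) with hU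
  set M : ℝ := Real.sqrt (∑' k, ‖xm k‖ ^ 2) with hM
  have hUnn : 0 ≤ U := Real.sqrt_nonneg _
  have hMnn : 0 ≤ M := Real.sqrt_nonneg _
  set C : ℝ := γ * (U + L * (M + U)) + β with hC
  have hCnn : 0 ≤ C := by positivity
  set B : ℝ := C / (1 - γ * L) with hB
  have hBnn : 0 ≤ B := div_nonneg hCnn (by linarith)
  -- pointwise bound on δu
  have hδb : ∀ k, (δu k) ^ 2 ≤ L ^ 2 * (‖xa k‖ ^ 2 + ‖xm k‖ ^ 2 + ‖u k‖ ^ 2) := by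
    intro k
    have h := hT (xa k) 0 (xm k) 0 (u k) 0
    rw [hT0, sub_zero, sub_zero, sub_zero, sub_zero] at h
    rw [← hδu k] at h
    have hs : 0 ≤ ‖xa k‖ ^ 2 + ‖xm k‖ ^ 2 + |u k| ^ 2 := by positivity
    have h2 := Real.sq_sqrt hs
    have h3 := Real.sqrt_nonneg (‖xa k‖ ^ 2 + ‖xm k‖ ^ 2 + |u k| ^ 2)
    have habs : |δu k| ^ 2 = (δu k) ^ 2 := sq_abs _
    have : (δu k) ^ 2 ≤ L ^ 2 * (‖xa k‖ ^ 2 + ‖xm k‖ ^ 2 + |u k| ^ 2) := by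
      nlinarith [abs_nonneg (δu k)]
    simpa [Real.norm_eq_abs] using this
  -- partial sums of ‖xa‖² are bounded by B²
  have key : ∀ N : ℕ, ∑ k ∈ Finset.range (N + 1), ‖xa k‖ ^ 2 ≤ B ^ 2 := by
    intro N
    set S : ℝ := ∑ k ∈ Finset.range (N + 1), ‖xa k‖ ^ 2 with hS
    have hSnn : 0 ≤ S := Finset.sum_nonneg fun k _ => by positivity
    have hsum_u : ∑ k ∈ Finset.range (N + 1), ‖u k‖ ^ 2 ≤ ∑' k, ‖u k‖ ^ 2 :=
      Summable.sum_le_tsum _ (fun k _ => by positivity) hu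
    have hsum_m : ∑ k ∈ Finset.range (N + 1), ‖xm k‖ ^ 2 ≤ ∑' k, ‖xm k‖ ^ 2 :=
      Summable.sum_le_tsum _ (fun k _ => by positivity) hxm
    have hsu : Real.sqrt (∑ k ∈ Finset.range (N + 1), (u k) ^ 2) ≤ U := by
      apply Real.sqrt_le_sqrt
      simpa [Real.norm_eq_abs, sq_abs] using hsum_u
    -- bound on sqrt of ∑ δu²
    have hsd : Real.sqrt (∑ k ∈ Finset.range (N + 1), (δu k) ^ 2) ≤
        L * (Real.sqrt S + M + U) := by
      have h1 : ∑ k ∈ Finset.range (N + 1), (δu k) ^ 2 ≤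
          L ^ 2 * (S + (∑ k ∈ Finset.range (N + 1), ‖xm k‖ ^ 2)
            + (∑ k ∈ Finset.range (N + 1), ‖u k‖ ^ 2)) := by
        calc ∑ k ∈ Finset.range (N + 1), (δu k) ^ 2
            ≤ ∑ k ∈ Finset.range (N + 1),
                L ^ 2 * (‖xa k‖ ^ 2 + ‖xm k‖ ^ 2 + ‖u k‖ ^ 2) :=
              Finset.sum_le_sum fun k _ => hδb k
          _ = _ := by
              simp [hS, Finset.mul_sum, mul_add, Finset.sum_add_distrib]
      have hm0 : (0:ℝ) ≤ ∑ k ∈ Finset.range (N + 1), ‖xm k‖ ^ 2 :=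
        Finset.sum_nonneg fun k _ => by positivity
      have hu0 : (0:ℝ) ≤ ∑ k ∈ Finset.range (N + 1), ‖u k‖ ^ 2 :=
        Finset.sum_nonneg fun k _ => by positivity
      calc Real.sqrt (∑ k ∈ Finset.range (N + 1), (δu k) ^ 2)
          ≤ Real.sqrt (L ^ 2 * (S + (∑ k ∈ Finset.range (N + 1), ‖xm k‖ ^ 2)
            + (∑ k ∈ Finset.range (N + 1), ‖u k‖ ^ 2))) := Real.sqrt_le_sqrt h1
        _ = L * Real.sqrt (S + (∑ k ∈ Finset.range (N + 1), ‖xm k‖ ^ 2)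
            + (∑ k ∈ Finset.range (N + 1), ‖u k‖ ^ 2)) := by
            rw [Real.sqrt_mul (by positivity), Real.sqrt_sq hL0]
        _ ≤ L * (Real.sqrt S + M + U) := by
            apply mul_le_mul_of_nonneg_left _ hL0
            calc Real.sqrt (S + (∑ k ∈ Finset.range (N + 1), ‖xm k‖ ^ 2)
                  + (∑ k ∈ Finset.range (N + 1), ‖u k‖ ^ 2))
                ≤ Real.sqrt (S + (∑ k ∈ Finset.range (N + 1), ‖xm k‖ ^ 2))
                  + Real.sqrt (∑ k ∈ Finset.range (N + 1), ‖u k‖ ^ 2) :=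
                  sqrt_add_le' _ _ (by linarith) hu0
              _ ≤ (Real.sqrt S + Real.sqrt (∑ k ∈ Finset.range (N + 1), ‖xm k‖ ^ 2))
                  + Real.sqrt (∑ k ∈ Finset.range (N + 1), ‖u k‖ ^ 2) := by
                  have := sqrt_add_le' S (∑ k ∈ Finset.range (N + 1), ‖xm k‖ ^ 2) hSnn hm0
                  linarith
              _ ≤ Real.sqrt S + M + U := by
                  have h2 : Real.sqrt (∑ k ∈ Finset.range (N + 1), ‖xm k‖ ^ 2) ≤ M :=
                    Real.sqrt_le_sqrt hsum_m
                  have h3 : Real.sqrt (∑ k ∈ Finset.range (N + 1), ‖u k‖ ^ 2) ≤ U :=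
                    Real.sqrt_le_sqrt hsum_u
                  linarith
    -- Minkowski on u + δu
    have hmink : Real.sqrt (∑ k ∈ Finset.range (N + 1), |u k + δu k| ^ 2) ≤
        Real.sqrt (∑ k ∈ Finset.range (N + 1), (u k) ^ 2) +
        Real.sqrt (∑ k ∈ Finset.range (N + 1), (δu k) ^ 2) := by
      have := minkowski' (N + 1) u δu
      simpa [sq_abs] using this
    have hmain : Real.sqrt S ≤ γ * L * Real.sqrt S + C := by
      have := hgain N
      have h4 : Real.sqrt (∑ k ∈ Finset.range (N + 1), |u k + δu k| ^ 2) ≤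
          U + L * (Real.sqrt S + M + U) := by linarith
      calc Real.sqrt S ≤ γ * Real.sqrt (∑ k ∈ Finset.range (N + 1), |u k + δu k| ^ 2) + β :=
            this
        _ ≤ γ * (U + L * (Real.sqrt S + M + U)) + β := by nlinarith
        _ = γ * L * Real.sqrt S + C := by ring
    have hsqS : Real.sqrt S ≤ B := by
      rw [hB, le_div_iff₀ (by linarith)]
      nlinarith
    calc S = (Real.sqrt S) ^ 2 := (Real.sq_sqrt hSnn).symm
      _ ≤ B ^ 2 := by nlinarith [Real.sqrt_nonneg S]
  apply summable_of_sum_range_le (c := B ^ 2) (fun k => by positivity)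
  intro N
  cases N with
  | zero => simp; positivity
  | succ N => exact key N
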